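/- Let $\beta_1, \ldots, \beta_k < 0$, $\alpha_n \to \infty$ with $n e^{\alpha_n \beta_1} \to \lambda \in (0, \infty)$. Then $\sum_{j=0}^{n} j \binom{n}{j} e^{\alpha_n\beta_1 j + \sum_{p=2}^k \alpha_n \beta_p j^p / n^{p-1}} \to \lambda e^{\lambda}$ as $n \to \infty$. -/

import Mathlib

open Real Filter Finset

lemma aux_summable (x : ℝ) : Summable (fun j : ℕ => (j:ℝ) * x ^ j / (j.factorial:ℝ)) := by
  apply (summable_nat_add_iff 1).mp
  apply Summable.congr ((Real.summable_pow_div_factorial x).mul_left x)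
  intro j
  have : ((j+1).factorial:ℝ) = (j+1) * (j.factorial:ℝ) := by
    push_cast [Nat.factorial_succ]; ring
  field_simp [this]
  rw [this]; push_cast; ring

lemma aux_tsum (x : ℝ) : ∑' j : ℕ, (j:ℝ) * x ^ j / (j.factorial:ℝ) = x * Real.exp x := by
  rw [(aux_summable x).tsum_eq_zero_add]
  have h1 : ∀ j : ℕ, ((j+1:ℕ):ℝ) * x ^ (j+1) / ((j+1).factorial:ℝ) = x * (x ^ j / (j.factorial:ℝ)) := by
    intro j
    have : ((j+1).factorial:ℝ) = (j+1) * (j.factorial:ℝ) := by push_cast [Nat.factorial_succ]; ring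
    push_cast
    rw [this]
    have hj : (j:ℝ) + 1 ≠ 0 := by positivity
    field_simp
    ring
  simp only [h1]
  rw [tsum_mul_left]
  have : ∑' j : ℕ, x ^ j / (j.factorial:ℝ) = Real.exp x := by
    rw [Real.exp_eq_exp_ℝ, NormedSpace.exp_eq_tsum_div]
  simp [this]

theorem stmt13 (k : ℕ) (hk : 1 ≤ k) (β : ℕ → ℝ)
    (hβ : ∀ p ∈ Finset.Icc 1 k, β p < 0)
    (α : ℕ → ℝ) (hα : Tendsto α atTop atTop)
    (lam : ℝ) (hlam : 0 < lam)
    (h : Tendsto (fun n : ℕ => (n : ℝ) * Real.exp (α n * β 1)) atTop (nhds lam)) :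
    Tendsto (fun n : ℕ => ∑ j ∈ Finset.range (n + 1), (j : ℝ) * (n.choose j : ℝ) *
        Real.exp (α n * β 1 * j +
          ∑ p ∈ Finset.Icc 2 k, α n * β p * (j : ℝ) ^ p / (n : ℝ) ^ (p - 1)))
      atTop (nhds (lam * Real.exp lam)) := by
  have hβ1 : β 1 < 0 := hβ 1 (Finset.mem_Icc.mpr ⟨le_refl 1, hk⟩)
  set t : ℕ → ℝ := fun n => Real.exp (α n * β 1) with ht
  set corr : ℕ → ℕ → ℝ :=
    fun n j => ∑ p ∈ Finset.Icc 2 k, α n * β p * (j:ℝ)^p / (n:ℝ)^(p-1) with hcorrdef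
  set F : ℕ → ℕ → ℝ :=
    fun n j => (j:ℝ) * (n.choose j : ℝ) * Real.exp (α n * β 1 * j + corr n j) with hFdef
  -- t tends to 0
  have htend0 : Tendsto t atTop (nhds 0) := by
    apply Real.tendsto_exp_atBot.comp
    exact hα.atTop_mul_const_of_neg hβ1
  -- the bound M
  obtain ⟨M0, hM0⟩ := h.bddAbove_range
  set M : ℝ := max M0 1 with hMdef
  have hM1 : (1:ℝ) ≤ M := le_max_right _ _
  have hM : ∀ n : ℕ, (n:ℝ) * t n ≤ M := fun n =>
    le_trans (hM0 (Set.mem_range_self n)) (le_max_left _ _)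
  -- log asymptotics
  have hlogn : Tendsto (fun n : ℕ => Real.log n + α n * β 1) atTop (nhds (Real.log lam)) := by
    have hcont := (Real.continuousAt_log hlam.ne').tendsto.comp h
    apply hcont.congr'
    filter_upwards [eventually_ge_atTop 1] with n hn
    have hn0 : (n:ℝ) ≠ 0 := by
      have : (1:ℝ) ≤ (n:ℝ) := by exact_mod_cast hn
      linarith
    simp [Function.comp, Real.log_mul hn0 (Real.exp_ne_zero _), Real.log_exp]
  have hlogdiv : Tendsto (fun n : ℕ => Real.log n / n) atTop (nhds 0) := by
    have := (Real.tendsto_pow_log_div_mul_add_atTop 1 0 1 one_ne_zero).comp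
      tendsto_natCast_atTop_atTop
    simpa [Function.comp_def] using this
  have hL : Tendsto (fun n : ℕ => (Real.log n + α n * β 1) / n) atTop (nhds 0) :=
    hlogn.div_atTop tendsto_natCast_atTop_atTop
  have hab : Tendsto (fun n : ℕ => α n * β 1 / n) atTop (nhds 0) := by
    have h2 := hL.sub hlogdiv
    rw [sub_zero] at h2
    apply h2.congr
    intro n
    rw [div_sub_div_same]
    ring_nf
  have hαdivn : Tendsto (fun n : ℕ => α n / n) atTop (nhds 0) := by
    have h2 := hab.mul_const (β 1)⁻¹
    rw [zero_mul] at h2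
    apply h2.congr
    intro n
    rw [div_mul_eq_mul_div, mul_assoc, mul_inv_cancel₀ hβ1.ne, mul_one]
  -- α n / n^(p-1) → 0 for p ≥ 2
  have hαdivp : ∀ p : ℕ, 2 ≤ p → Tendsto (fun n : ℕ => α n / (n:ℝ)^(p-1)) atTop (nhds 0) := by
    intro p hp
    apply tendsto_of_tendsto_of_tendsto_of_le_of_le' tendsto_const_nhds hαdivn
    · filter_upwards [hα.eventually_ge_atTop 0, eventually_ge_atTop 1] with n hαn hn1
      positivity
    · filter_upwards [hα.eventually_ge_atTop 0, eventually_ge_atTop 1] with n hαn hn1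
      have hn1' : (1:ℝ) ≤ (n:ℝ) := by exact_mod_cast hn1
      have hnp : (n:ℝ) ≤ (n:ℝ)^(p-1) := by
        apply le_self_pow₀ (by linarith)
        omega
      apply div_le_div_of_nonneg_left hαn (by linarith) hnp
  -- corr n j → 0 for fixed j
  have hcorr : ∀ j : ℕ, Tendsto (fun n => corr n j) atTop (nhds 0) := by
    intro j
    have h2 : Tendsto (fun n : ℕ => ∑ p ∈ Finset.Icc 2 k,
        (α n / (n:ℝ)^(p-1)) * (β p * (j:ℝ)^p)) atTop (nhds (∑ p ∈ Finset.Icc 2 k, (0:ℝ))) := by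
      apply tendsto_finset_sum
      intro p hp
      have h3 := (hαdivp p (Finset.mem_Icc.mp hp).1).mul_const (β p * (j:ℝ)^p)
      simpa using h3
    rw [Finset.sum_const, smul_zero] at h2
    apply h2.congr
    intro n
    simp only [hcorrdef]
    apply Finset.sum_congr rfl
    intro p hp
    ring
  -- the key convergence of tsum
  have key : Tendsto (fun n => ∑' j : ℕ, F n j) atTop
      (nhds (∑' j : ℕ, (j:ℝ) * lam ^ j / (j.factorial:ℝ))) := by
    apply tendsto_tsum_of_dominated_convergence
      (bound := fun j : ℕ => (j:ℝ) * M ^ j / (j.factorial:ℝ)) (aux_summable M)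
    · -- pointwise convergence
      intro j
      have hfac : ∀ i : ℕ, Tendsto (fun n : ℕ => ((n:ℝ) - i) * t n) atTop (nhds lam) := by
        intro i
        have h2 : Tendsto (fun n : ℕ => (n:ℝ) * t n - (i:ℝ) * t n) atTop
            (nhds (lam - (i:ℝ) * 0)) := h.sub (htend0.const_mul (i:ℝ))
        rw [mul_zero, sub_zero] at h2
        apply h2.congr
        intro n; ring
      have hP : Tendsto (fun n : ℕ => ∏ i ∈ Finset.range j, (((n:ℝ) - i) * t n)) atTop
          (nhds (lam ^ j)) := by
        have h2 := tendsto_finset_prod (Finset.range j)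
          (fun i (_ : i ∈ Finset.range j) => hfac i)
        simpa using h2
      have hE : Tendsto (fun n => Real.exp (corr n j)) atTop (nhds 1) := by
        have := (Real.continuous_exp.tendsto 0).comp (hcorr j)
        simpa [Function.comp_def] using this
      have hmain : Tendsto (fun n : ℕ => (j:ℝ) *
          ((∏ i ∈ Finset.range j, (((n:ℝ) - i) * t n)) / (j.factorial:ℝ)) *
          Real.exp (corr n j)) atTop (nhds ((j:ℝ) * (lam ^ j / (j.factorial:ℝ)) * 1)) :=
        (tendsto_const_nhds.mul (hP.div_const _)).mul hE
      rw [mul_one, ← mul_div_assoc] at hmain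
      apply hmain.congr'
      filter_upwards [eventually_ge_atTop j] with n hn
      -- rewrite choose via product
      have hc : (n.choose j : ℝ) = (∏ i ∈ Finset.range j, ((n:ℝ) - i)) / (j.factorial:ℝ) := by
        have h1 : (j.factorial * n.choose j : ℕ) = ∏ i ∈ Finset.range j, (n - i) := by
          rw [← Nat.descFactorial_eq_factorial_mul_choose, Nat.descFactorial_eq_prod_range]
        have h2 : ((j.factorial * n.choose j : ℕ) : ℝ) = ∏ i ∈ Finset.range j, ((n:ℝ) - i) := by
          rw [h1]
          push_cast
          apply Finset.prod_congr rfl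
          intro i hi
          have : i ≤ n := le_trans (Nat.le_of_lt (Finset.mem_range.mp hi)) hn
          rw [Nat.cast_sub this]
        push_cast at h2
        field_simp
        linarith [h2]
      simp only [hFdef]
      rw [hc, Real.exp_add]
      have hexpj : Real.exp (α n * β 1 * (j:ℝ)) = t n ^ j := by
        rw [mul_comm (α n * β 1) (j:ℝ), Real.exp_nat_mul]
      rw [hexpj, Finset.prod_mul_distrib, Finset.prod_const, Finset.card_range]
      ring
    · -- the bound
      filter_upwards [hα.eventually_ge_atTop 0, eventually_ge_atTop 1] with n hαn hn1
      intro j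
      have hF0 : 0 ≤ F n j := by
        simp only [hFdef]
        positivity
      rw [Real.norm_eq_abs, abs_of_nonneg hF0]
      have hcorr0 : corr n j ≤ 0 := by
        apply Finset.sum_nonpos
        intro p hp
        obtain ⟨hp2, hpk⟩ := Finset.mem_Icc.mp hp
        have hbp : β p < 0 := hβ p (Finset.mem_Icc.mpr ⟨by omega, hpk⟩)
        apply div_nonpos_of_nonpos_of_nonneg
        · have : 0 ≤ α n * (j:ℝ)^p := by positivity
          nlinarith
        · positivity
      have hchoose : (n.choose j : ℝ) ≤ (n:ℝ)^j / (j.factorial:ℝ) := by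
        have h1 : (j.factorial * n.choose j : ℕ) ≤ n ^ j := by
          rw [← Nat.descFactorial_eq_factorial_mul_choose]
          exact Nat.descFactorial_le_pow _ _
        have h2 : ((j.factorial : ℕ):ℝ) * (n.choose j : ℝ) ≤ ((n:ℝ))^j := by
          exact_mod_cast h1
        rw [le_div_iff₀ (by positivity : (0:ℝ) < (j.factorial:ℝ))]
        linarith
      have hnt0 : (0:ℝ) ≤ (n:ℝ) * t n := by positivity
      calc F n j = (j:ℝ) * (n.choose j : ℝ) * Real.exp (α n * β 1 * j + corr n j) := by
            simp only [hFdef]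
        _ ≤ (j:ℝ) * (n.choose j : ℝ) * Real.exp (α n * β 1 * j) := by
            apply mul_le_mul_of_nonneg_left (Real.exp_le_exp.mpr (by linarith)) (by positivity)
        _ = (j:ℝ) * (n.choose j : ℝ) * t n ^ j := by
            rw [mul_comm (α n * β 1) (j:ℝ), Real.exp_nat_mul]
        _ ≤ (j:ℝ) * ((n:ℝ)^j / (j.factorial:ℝ)) * t n ^ j := by
            gcongr
        _ = (j:ℝ) * ((n:ℝ) * t n) ^ j / (j.factorial:ℝ) := by
            rw [mul_pow]; ring
        _ ≤ (j:ℝ) * M ^ j / (j.factorial:ℝ) := by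
            gcongr
            exact hM n
  -- conclude
  rw [← aux_tsum lam]
  apply key.congr
  intro n
  simp only [hFdef, hcorrdef]
  apply tsum_eq_sum
  intro j hj
  have hnj : n < j := by
    simpa using hj
  rw [Nat.choose_eq_zero_of_lt hnj]
  simp
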